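/- arXiv:2504.17381 — 4 statements merged into one kernel-verified Lean document; each statement's English description precedes it below -/
import Mathlib

section
/- For every 0 < ε ≤ 1/5 there exists a convex polytope D in ℝ³ with O(ε⁻²) vertices such that the closed unit ball B₁(0) ⊆ D ⊆ B_{1+4ε}(0). -/
open Metric Finset


local notation "E" => EuclideanSpace ℝ (Fin 3)

/-- Separation lemma: if every unit direction has a vertex with inner product ≥ 1,
the convex hull contains the unit ball. -/
lemma hull_of_net (V : Finset (EuclideanSpace ℝ (Fin 3)))
    (h : ∀ u : EuclideanSpace ℝ (Fin 3), ‖u‖ = 1 → ∃ v ∈ V, (1:ℝ) ≤ inner ℝ u v) :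
    closedBall (0 : EuclideanSpace ℝ (Fin 3)) 1 ⊆ convexHull ℝ (V : Set (EuclideanSpace ℝ (Fin 3))) := by
  intro x hx
  by_contra hxh
  have hcl : IsClosed (convexHull ℝ (V : Set E)) :=
    (V.finite_toSet.isCompact_convexHull ℝ).isClosed
  obtain ⟨f, s, hfs, hsx⟩ :=
    geometric_hahn_banach_closed_point (convex_convexHull ℝ _) hcl hxh
  obtain ⟨w, hw⟩ := (InnerProductSpace.toDual ℝ (EuclideanSpace ℝ (Fin 3))).surjective f
  have hfw : ∀ y, f y = inner ℝ w y := fun y => by rw [← hw]; rfl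
  have hw0 : w ≠ 0 := by
    rintro rfl
    obtain ⟨v, hv, _⟩ := h (EuclideanSpace.single 0 1) (by simp)
    have h1 := hfs v (subset_convexHull ℝ _ hv)
    rw [hfw] at h1 hsx
    simp at h1 hsx
    linarith
  set u : E := ‖w‖⁻¹ • w with hu
  have hun : ‖u‖ = 1 := norm_smul_inv_norm hw0
  obtain ⟨v, hv, hv1⟩ := h u hun
  have hwu : w = ‖w‖ • u := by
    rw [hu, smul_smul, mul_inv_cancel₀ (norm_ne_zero_iff.mpr hw0), one_smul]
  have h2 : f v = ‖w‖ * inner ℝ u v := by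
    rw [hfw]
    conv_lhs => rw [hwu]
    exact real_inner_smul_left u v ‖w‖
  have h3 : f x ≤ ‖w‖ := by
    rw [hfw]
    calc (inner ℝ w x : ℝ) ≤ ‖w‖ * ‖x‖ := real_inner_le_norm w x
    _ ≤ ‖w‖ * 1 := by
        have := mem_closedBall_zero_iff.mp hx
        exact mul_le_mul_of_nonneg_left this (norm_nonneg _)
    _ = ‖w‖ := mul_one _
  have h4 : ‖w‖ ≤ f v := by
    rw [h2]
    nlinarith [norm_nonneg w]
  have h5 := hfs v (subset_convexHull ℝ _ hv)
  linarith

/-- Normalization stability. -/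
lemma norm_normalize_sub {E' : Type*} [NormedAddCommGroup E'] [NormedSpace ℝ E']
    (x y : E') (hx : 1 ≤ ‖x‖) (hy : y ≠ 0) :
    ‖‖x‖⁻¹ • x - ‖y‖⁻¹ • y‖ ≤ 2 * ‖x - y‖ := by
  have hx0 : x ≠ 0 := by intro h; rw [h, norm_zero] at hx; linarith
  have hxn : (0:ℝ) < ‖x‖ := by linarith
  have hyn : (0:ℝ) < ‖y‖ := norm_pos_iff.mpr hy
  have key : ‖x‖⁻¹ • x - ‖y‖⁻¹ • y = ‖x‖⁻¹ • (x - y) + (‖x‖⁻¹ - ‖y‖⁻¹) • y := by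
    rw [smul_sub, sub_smul]
    abel
  rw [key]
  have h1 : ‖‖x‖⁻¹ • (x - y)‖ = ‖x‖⁻¹ * ‖x - y‖ := by
    rw [norm_smul, Real.norm_eq_abs, abs_of_pos (inv_pos.mpr hxn)]
  have h2 : ‖(‖x‖⁻¹ - ‖y‖⁻¹) • y‖ = |‖x‖⁻¹ - ‖y‖⁻¹| * ‖y‖ := by
    rw [norm_smul, Real.norm_eq_abs]
  have h3 : |‖x‖⁻¹ - ‖y‖⁻¹| * ‖y‖ = |‖y‖ - ‖x‖| / ‖x‖ := by
    rw [show ‖x‖⁻¹ - ‖y‖⁻¹ = (‖y‖ - ‖x‖) / (‖x‖ * ‖y‖) by field_simp]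
    rw [abs_div, abs_of_pos (mul_pos hxn hyn)]
    field_simp
  have h4 : |‖y‖ - ‖x‖| ≤ ‖x - y‖ := by
    rw [abs_sub_comm]
    exact abs_norm_sub_norm_le x y
  calc ‖‖x‖⁻¹ • (x - y) + (‖x‖⁻¹ - ‖y‖⁻¹) • y‖
      ≤ ‖‖x‖⁻¹ • (x - y)‖ + ‖(‖x‖⁻¹ - ‖y‖⁻¹) • y‖ := norm_add_le _ _
  _ = ‖x‖⁻¹ * ‖x - y‖ + |‖y‖ - ‖x‖| / ‖x‖ := by rw [h1, h2, h3]
  _ ≤ 1 * ‖x - y‖ + ‖x - y‖ / 1 := by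
      have h5 := inv_le_one_of_one_le₀ hx
      gcongr
  _ = 2 * ‖x - y‖ := by ring



set_option maxHeartbeats 2000000 in
/-- For every `0 < ε ≤ 1/5` there exists a convex polytope `D` in `ℝ³`
with `O(ε⁻²)` vertices such that the closed unit ball `B₁(0) ⊆ D ⊆ B_{1+4ε}(0)`. -/
theorem stmt_0 :
    ∃ C : ℝ, 0 < C ∧
      ∀ ε : ℝ, 0 < ε → ε ≤ 1/5 →
        ∃ V : Finset (EuclideanSpace ℝ (Fin 3)),
          (V.card : ℝ) ≤ C * ε⁻¹ ^ 2 ∧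
          Metric.closedBall (0 : EuclideanSpace ℝ (Fin 3)) 1 ⊆ convexHull ℝ (V : Set (EuclideanSpace ℝ (Fin 3))) ∧
          convexHull ℝ (V : Set (EuclideanSpace ℝ (Fin 3))) ⊆
            Metric.closedBall (0 : EuclideanSpace ℝ (Fin 3)) (1 + 4 * ε) := by
  refine ⟨27, by norm_num, fun ε hε hε5 => ?_⟩
  set sε := Real.sqrt ε with hsε
  have hsε0 : 0 < sε := Real.sqrt_pos.mpr hε
  have hsε2 : sε ^ 2 = ε := Real.sq_sqrt hε.le
  have hsεhalf : sε ≤ 1/2 := by nlinarith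
  set n : ℕ := ⌈2/sε⌉₊ with hn
  have hn2 : 2/sε ≤ (n:ℝ) := Nat.le_ceil _
  have hnpos : (0:ℝ) < n := lt_of_lt_of_le (by positivity) hn2
  have hn3 : (n:ℝ) + 1 ≤ 3/sε := by
    have h1 : (n:ℝ) < 2/sε + 1 := Nat.ceil_lt_add_one (by positivity)
    have h2 : (2:ℝ) ≤ 1/sε := by rw [le_div_iff₀ hsε0]; linarith
    calc (n:ℝ) + 1 ≤ 2/sε + 2 := by linarith
    _ ≤ 2/sε + 1/sε := by linarith
    _ = 3/sε := by ring
  set R : ℝ := 1 + 3*ε with hR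
  have hR1 : 1 ≤ R := by simp [hR]; linarith
  set G : (Fin 3 → Fin (n+1)) → EuclideanSpace ℝ (Fin 3) :=
    fun c => (WithLp.toLp 2 (fun i => -1 + 2*((c i : ℕ):ℝ)/n) : EuclideanSpace ℝ (Fin 3)) with hG
  set F : (Fin 3 → Fin (n+1)) → EuclideanSpace ℝ (Fin 3) :=
    fun c => R • (‖G c‖⁻¹ • G c) with hF
  classical
  refine ⟨Finset.image F Finset.univ, ?_, ?_, ?_⟩
  · -- cardinality
    have hc : (Finset.image F Finset.univ).card ≤ (n+1)^3 := by
      calc (Finset.image F Finset.univ).card ≤ (Finset.univ : Finset (Fin 3 → Fin (n+1))).card :=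
        Finset.card_image_le
      _ = (n+1)^3 := by simp [Fintype.card_fun]
    have hc2 : ((Finset.image F Finset.univ).card : ℝ) ≤ ((n:ℝ)+1)^3 := by
      calc ((Finset.image F Finset.univ).card : ℝ) ≤ (((n+1)^3 : ℕ) : ℝ) := by exact_mod_cast hc
      _ = ((n:ℝ)+1)^3 := by push_cast; ring
    have h3 : ((n:ℝ)+1)^3 ≤ (3/sε)^3 := by
      exact pow_le_pow_left₀ (by positivity) hn3 3
    have h4 : (3/sε)^3 ≤ 27 * ε⁻¹^2 := by
      have hsε1 : sε ≤ 1 := by linarith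
      have hss : ε^2 ≤ sε^3 := by nlinarith
      calc (3/sε)^3 = 27/sε^3 := by rw [div_pow]; norm_num
      _ ≤ 27/ε^2 := by gcongr
      _ = 27 * ε⁻¹^2 := by rw [inv_pow]; ring
    linarith
  · -- lower inclusion
    apply hull_of_net
    intro u hu
    have husq : u 0^2 + u 1^2 + u 2^2 = 1 := by
      have h1 : Real.sqrt (∑ i, ‖u i‖^2) = 1 := by rw [← EuclideanSpace.norm_eq]; exact hu
      have h2 : (∑ i, ‖u i‖^2) = 1 := by
        nlinarith [Real.sq_sqrt (show (0:ℝ) ≤ ∑ i, ‖u i‖^2 by positivity)]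
      simpa [Fin.sum_univ_three, Real.norm_eq_abs, sq_abs] using h2
    set m : ℝ := max (max |u 0| |u 1|) |u 2| with hm
    have hmi : ∀ i, |u i| ≤ m := by
      intro i
      fin_cases i
      · exact le_max_of_le_left (le_max_left _ _)
      · exact le_max_of_le_left (le_max_right _ _)
      · exact le_max_right _ _
    have hm1 : 1 ≤ 3*m^2 := by
      nlinarith [hmi 0, hmi 1, hmi 2, sq_abs (u 0), sq_abs (u 1), sq_abs (u 2),
        abs_nonneg (u 0), abs_nonneg (u 1), abs_nonneg (u 2)]
    have hmpos : 0 < m := by nlinarith [hmi 0, abs_nonneg (u 0)]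
    have hule0 : |u 0| ≤ 1 := by
      nlinarith [sq_abs (u 0), abs_nonneg (u 0), sq_nonneg (u 1), sq_nonneg (u 2)]
    have hule1 : |u 1| ≤ 1 := by
      nlinarith [sq_abs (u 1), abs_nonneg (u 1), sq_nonneg (u 0), sq_nonneg (u 2)]
    have hule2 : |u 2| ≤ 1 := by
      nlinarith [sq_abs (u 2), abs_nonneg (u 2), sq_nonneg (u 0), sq_nonneg (u 1)]
    have hmle1 : m ≤ 1 := by
      rw [hm]
      exact max_le (max_le hule0 hule1) hule2
    set p : EuclideanSpace ℝ (Fin 3) := m⁻¹ • u with hp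
    have hpi : ∀ i, p i = m⁻¹ * u i := fun i => rfl
    have hpile : ∀ i, |p i| ≤ 1 := by
      intro i
      rw [hpi, abs_mul, abs_inv, abs_of_pos hmpos, inv_mul_eq_div, div_le_one hmpos]
      exact hmi i
    have hpnorm : ‖p‖ = m⁻¹ := by
      rw [hp, norm_smul, Real.norm_eq_abs, abs_of_pos (inv_pos.mpr hmpos), hu, mul_one]
    have hp1 : 1 ≤ ‖p‖ := by
      rw [hpnorm]
      nlinarith [inv_pos.mpr hmpos, mul_inv_cancel₀ hmpos.ne']
    set c : Fin 3 → Fin (n+1) := fun i => ⟨⌊(p i + 1) * n / 2 + 1/2⌋₊, by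
      have h1 := (abs_le.mp (hpile i)).1
      have h2 := (abs_le.mp (hpile i)).2
      apply (Nat.floor_lt (by nlinarith)).mpr
      push_cast
      nlinarith⟩ with hc
    have hGci : ∀ i, G c i = -1 + 2*((⌊(p i + 1) * n / 2 + 1/2⌋₊:ℕ):ℝ)/n := fun i => rfl
    have hkey : ∀ i, |p i - G c i| ≤ 1/n := by
      intro i
      have h1 := (abs_le.mp (hpile i)).1
      have ht0 : (0:ℝ) ≤ (p i + 1) * n / 2 + 1/2 := by nlinarith
      have hj1 : ((⌊(p i + 1) * n / 2 + 1/2⌋₊:ℕ):ℝ) ≤ (p i + 1) * n / 2 + 1/2 :=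
        Nat.floor_le ht0
      have hj2 : (p i + 1) * n / 2 + 1/2 < ((⌊(p i + 1) * n / 2 + 1/2⌋₊:ℕ):ℝ) + 1 :=
        Nat.lt_floor_add_one _
      rw [hGci i]
      set J : ℝ := ((⌊(p i + 1) * n / 2 + 1/2⌋₊:ℕ):ℝ) with hJ
      have e1 : p i - (-1 + 2*J/n) = 2*((p i + 1) * n / 2 - J)/n := by
        field_simp
        ring
      rw [e1]
      have habs : |(p i + 1) * n / 2 - J| ≤ 1/2 := abs_le.mpr ⟨by linarith, by linarith⟩
      calc |2*((p i + 1) * n / 2 - J)/(n:ℝ)| = 2*|(p i + 1) * n / 2 - J|/n := by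
            rw [abs_div, abs_of_pos hnpos, abs_mul]; norm_num
      _ ≤ 2*(1/2)/n := by gcongr
      _ = 1/n := by ring
    have hpq : ‖p - G c‖ ≤ Real.sqrt 3 / n := by
      have hcoord : ∀ i : Fin 3, ‖(p - G c) i‖^2 ≤ (1/(n:ℝ))^2 := by
        intro i
        have h := hkey i
        have e : ‖(p - G c) i‖ = |p i - G c i| := rfl
        rw [e]
        exact pow_le_pow_left₀ (abs_nonneg _) h 2
      rw [EuclideanSpace.norm_eq]
      calc Real.sqrt (∑ i, ‖(p - G c) i‖^2) ≤ Real.sqrt (3 * (1/(n:ℝ))^2) := by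
            apply Real.sqrt_le_sqrt
            rw [Fin.sum_univ_three]
            linarith [hcoord 0, hcoord 1, hcoord 2]
      _ = Real.sqrt 3 / n := by
            rw [Real.sqrt_mul (by norm_num), Real.sqrt_sq (by positivity)]
            ring
    have h2n : 2/(n:ℝ) ≤ sε := by
      rw [div_le_iff₀ hnpos]
      rw [div_le_iff₀ hsε0] at hn2
      linarith
    have hsqrt3a : Real.sqrt 3 ^ 2 = 3 := Real.sq_sqrt (by norm_num)
    have hsqrt3b : (0:ℝ) ≤ Real.sqrt 3 := Real.sqrt_nonneg 3
    have hsqrt3c : Real.sqrt 3 < 2 := by nlinarith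
    have hGle : ‖p - G c‖ ≤ Real.sqrt 3 * sε / 2 := by
      calc ‖p - G c‖ ≤ Real.sqrt 3 / n := hpq
      _ = Real.sqrt 3 * (1/n) := by ring
      _ ≤ Real.sqrt 3 * (sε/2) := by
            have hhalf : 1/(n:ℝ) ≤ sε/2 := by
              rw [div_le_div_iff₀ hnpos (by norm_num)]
              rw [div_le_iff₀ hnpos] at h2n
              linarith
            exact mul_le_mul_of_nonneg_left hhalf hsqrt3b
      _ = Real.sqrt 3 * sε / 2 := by ring
    have hGle' : ‖p - G c‖ ≤ sε := by nlinarith [norm_nonneg (p - G c)]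
    have hG0 : G c ≠ 0 := by
      intro h0
      rw [h0, sub_zero] at hGle'
      linarith
    have hun : u = ‖p‖⁻¹ • p := by
      rw [hpnorm, inv_inv, hp, smul_smul, mul_inv_cancel₀ hmpos.ne', one_smul]
    set w : EuclideanSpace ℝ (Fin 3) := ‖G c‖⁻¹ • G c with hw
    have hd : ‖u - w‖ ≤ 2 * ‖p - G c‖ := by
      rw [hun, hw]; exact norm_normalize_sub p (G c) hp1 hG0
    have hd2 : ‖u - w‖^2 ≤ 3*ε := by
      nlinarith [norm_nonneg (u - w), norm_nonneg (p - G c)]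
    have hwnorm : ‖w‖ = 1 := norm_smul_inv_norm hG0
    have hinner : (1:ℝ) - (3/2)*ε ≤ inner ℝ u w := by
      have hns := norm_sub_sq_real u w
      rw [hu, hwnorm] at hns
      nlinarith
    refine ⟨F c, Finset.mem_image_of_mem F (Finset.mem_univ c), ?_⟩
    have hFc : (inner ℝ u (F c) : ℝ) = R * inner ℝ u w := by
      rw [hF]
      exact real_inner_smul_right _ _ _
    rw [hFc, hR]
    nlinarith
  · -- upper inclusion
    apply convexHull_min _ (convex_closedBall _ _)
    intro v hv
    simp only [Finset.coe_image, Set.mem_image, Finset.mem_coe] at hv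
    obtain ⟨c, _, rfl⟩ := hv
    rw [mem_closedBall_zero_iff, hF]
    have : ‖R • (‖G c‖⁻¹ • G c)‖ ≤ R := by
      rw [norm_smul, norm_smul, Real.norm_eq_abs, Real.norm_eq_abs,
        abs_of_nonneg (by linarith : (0:ℝ) ≤ R), abs_of_nonneg (by positivity)]
      rcases eq_or_ne (G c) 0 with h | h
      · simp [h]; linarith
      · rw [inv_mul_cancel₀ (norm_ne_zero_iff.mpr h), mul_one]
    calc ‖R • (‖G c‖⁻¹ • G c)‖ ≤ R := this
    _ ≤ 1 + 4*ε := by rw [hR]; linarith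
end

section
/- Let P, Q be polygonal curves parametrized over [0,1] and Δ ≥ 0. The Fréchet distance d_F(P,Q) is at most Δ if and only if there exists a path from (0,0) to (1,1) inside the Δ-free space {(x,y) ∈ [0,1]² : ‖P(x) − Q(y)‖ ≤ Δ} that is monotone nondecreasing in both coordinates. -/
open Set

/-- The continuous Fréchet distance between two curves parametrized over `[0,1]`:
the infimum over nondecreasing surjective reparametrizations `f, g` of `[0,1]`
of the maximal pointwise distance. -/
noncomputable def frechetDist {E : Type*} [SeminormedAddCommGroup E] (P Q : ℝ → E) : ℝ :=
  sInf {r : ℝ | ∃ f g : ℝ → ℝ,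
    MonotoneOn f (Icc 0 1) ∧ MonotoneOn g (Icc 0 1) ∧
    f '' Icc 0 1 = Icc 0 1 ∧ g '' Icc 0 1 = Icc 0 1 ∧
    ∀ t ∈ Icc (0:ℝ) 1, ‖P (f t) - Q (g t)‖ ≤ r}

/-- The subcurve `P[s,t]`, reparametrized over `[0,1]`. -/
def subcurve {E : Type*} (P : ℝ → E) (s t : ℝ) : ℝ → E := fun u => P (s + u * (t - s))

/-- The `Δ`-coverage of a curve `Q` on `P`: the union of all parameter intervals `[s,t] ⊆ [0,1]`
such that the subcurve `P[s,t]` has Fréchet distance at most `Δ` to `Q`. -/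
def Cov {E : Type*} [SeminormedAddCommGroup E] (P Q : ℝ → E) (Δ : ℝ) : Set ℝ :=
  ⋃ (s : ℝ) (t : ℝ) (_ : 0 ≤ s) (_ : s ≤ t) (_ : t ≤ 1)
    (_ : frechetDist (subcurve P s t) Q ≤ Δ), Icc s t

/-- `P` is a polygonal curve of complexity (number of vertices) at most `n`. -/
def IsPolygonal {E : Type*} [SeminormedAddCommGroup E] [NormedSpace ℝ E]
    (P : ℝ → E) (n : ℕ) : Prop :=
  ∃ m : ℕ, m + 1 ≤ n ∧ ∃ t : Fin (m + 1) → ℝ,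
    t 0 = 0 ∧ t (Fin.last m) = 1 ∧ Monotone t ∧
    ∀ i : Fin m, ∀ u ∈ Icc (t i.castSucc) (t i.succ),
      P u = P (t i.castSucc) +
        ((u - t i.castSucc) / (t i.succ - t i.castSucc)) • (P (t i.succ) - P (t i.castSucc))

/-- The `Δ`-free space of `S` and `P` (the first coordinate is the parameter of `P`). -/
def freeSpace {E : Type*} [SeminormedAddCommGroup E] (S P : ℝ → E) (Δ : ℝ) : Set (ℝ × ℝ) :=
  {p : ℝ × ℝ | p.1 ∈ Icc (0:ℝ) 1 ∧ p.2 ∈ Icc (0:ℝ) 1 ∧ ‖P p.1 - S p.2‖ ≤ Δ}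

/-- A path inside `F` from `p` to `q` that is monotone nondecreasing in both coordinates. -/
def IsMonotonePathIn (F : Set (ℝ × ℝ)) (p q : ℝ × ℝ) : Prop :=
  ∃ γ : ℝ → ℝ × ℝ, ContinuousOn γ (Icc 0 1) ∧ γ 0 = p ∧ γ 1 = q ∧
    MonotoneOn (fun u => (γ u).1) (Icc 0 1) ∧ MonotoneOn (fun u => (γ u).2) (Icc 0 1) ∧
    ∀ u ∈ Icc (0:ℝ) 1, γ u ∈ F

lemma glueClosed {α β : Type*} [TopologicalSpace α] [TopologicalSpace β] {f : α → β}
    {s t : Set α} (hs : IsClosed s) (ht : IsClosed t)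
    (hfs : ContinuousOn f s) (hft : ContinuousOn f t) : ContinuousOn f (s ∪ t) := by
  intro x hx
  rw [continuousWithinAt_union]
  constructor
  · by_cases h : x ∈ s
    · exact hfs x h
    · exact continuousWithinAt_of_notMem_closure (by rwa [hs.closure_eq])
  · by_cases h : x ∈ t
    · exact hft x h
    · exact continuousWithinAt_of_notMem_closure (by rwa [ht.closure_eq])

lemma monoSurj_continuousOn {f : ℝ → ℝ} (hm : MonotoneOn f (Icc 0 1))
    (him : f '' Icc 0 1 = Icc 0 1) : ContinuousOn f (Icc 0 1) := by
  have hmaps : ∀ x ∈ Icc (0:ℝ) 1, f x ∈ Icc (0:ℝ) 1 := fun x hx => him ▸ mem_image_of_mem f hx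
  intro a ha
  have hR : ContinuousWithinAt f (Icc 0 1 ∩ Ici a) a := by
    by_cases hfa : f a = 1
    · refine (continuousWithinAt_const (b := f a)).congr ?_ rfl
      intro y hy
      have h1 : f a ≤ f y := hm ha hy.1 hy.2
      have h2 : f y ≤ 1 := (hmaps y hy.1).2
      simp only [hfa] at h1 ⊢; linarith
    · have hfa1 : f a < 1 := lt_of_le_of_ne (hmaps a ha).2 hfa
      have ha1 : a < 1 := by
        rcases lt_or_ge a 1 with h | h
        · exact h
        · exfalso
          have h1mem : (1:ℝ) ∈ f '' Icc 0 1 := by rw [him]; exact right_mem_Icc.2 zero_le_one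
          obtain ⟨x, hx, hfx⟩ := h1mem
          have : f x ≤ f a := hm hx ha (le_trans hx.2 (le_antisymm ha.2 h).symm.le)
          rw [hfx] at this; linarith
      have key : ContinuousWithinAt f (Ici a) a := by
        refine continuousWithinAt_right_of_monotoneOn_of_exists_between
          (s := Icc a 1) (hm.mono (Icc_subset_Icc ha.1 le_rfl)) ?_ ?_
        · exact Icc_mem_nhdsGE_of_mem ⟨le_rfl, ha1⟩
        · intro b hb
          have hfa0 : 0 ≤ f a := (hmaps a ha).1
          set y := (f a + min b 1) / 2 with hy
          have hlt : f a < min b 1 := lt_min hb hfa1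
          have hy1 : f a < y := by rw [hy]; linarith
          have hy2 : y < min b 1 := by rw [hy]; linarith
          have hymem : y ∈ f '' Icc 0 1 := by
            rw [him]
            exact ⟨by linarith, le_trans hy2.le (min_le_right _ _)⟩
          obtain ⟨c, hc, hfc⟩ := hymem
          have hac : a ≤ c := by
            by_contra hcl
            push_neg at hcl
            have : f c ≤ f a := hm hc ha hcl.le
            rw [hfc] at this; linarith
          exact ⟨c, ⟨hac, hc.2⟩, by rw [hfc]; exact ⟨hy1, lt_of_lt_of_le hy2 (min_le_left _ _)⟩⟩
      exact key.mono inter_subset_right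
  have hL : ContinuousWithinAt f (Icc 0 1 ∩ Iic a) a := by
    by_cases hfa : f a = 0
    · refine (continuousWithinAt_const (b := f a)).congr ?_ rfl
      intro y hy
      have h1 : f y ≤ f a := hm hy.1 ha hy.2
      have h2 : 0 ≤ f y := (hmaps y hy.1).1
      simp only [hfa] at h1 ⊢; linarith
    · have hfa1 : 0 < f a := lt_of_le_of_ne (hmaps a ha).1 (Ne.symm hfa)
      have ha1 : 0 < a := by
        rcases lt_or_ge 0 a with h | h
        · exact h
        · exfalso
          have h1mem : (0:ℝ) ∈ f '' Icc 0 1 := by rw [him]; exact left_mem_Icc.2 zero_le_one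
          obtain ⟨x, hx, hfx⟩ := h1mem
          have : f a ≤ f x := hm ha hx (le_trans (le_antisymm h ha.1).le hx.1)
          rw [hfx] at this; linarith
      have key : ContinuousWithinAt f (Iic a) a := by
        refine continuousWithinAt_left_of_monotoneOn_of_exists_between
          (s := Icc 0 a) (hm.mono (Icc_subset_Icc le_rfl ha.2)) ?_ ?_
        · exact Icc_mem_nhdsLE_of_mem ⟨ha1, le_rfl⟩
        · intro b hb
          have hfa0 : f a ≤ 1 := (hmaps a ha).2
          set y := (max b 0 + f a) / 2 with hy
          have hlt : max b 0 < f a := max_lt hb hfa1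
          have hy1 : y < f a := by rw [hy]; linarith
          have hy2 : max b 0 < y := by rw [hy]; linarith
          have hymem : y ∈ f '' Icc 0 1 := by
            rw [him]
            exact ⟨le_trans (le_max_right _ _) hy2.le, by linarith⟩
          obtain ⟨c, hc, hfc⟩ := hymem
          have hac : c ≤ a := by
            by_contra hcl
            push_neg at hcl
            have : f a ≤ f c := hm ha hc hcl.le
            rw [hfc] at this; linarith
          exact ⟨c, ⟨hc.1, hac⟩, by rw [hfc]; exact ⟨lt_of_le_of_lt (le_max_left _ _) hy2, hy1⟩⟩
      exact key.mono inter_subset_right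
  have := hL.union hR
  exact this.mono (fun x hx => by rcases le_total x a with h | h
                                  exacts [Or.inl ⟨hx, h⟩, Or.inr ⟨hx, h⟩])



lemma mono_surj_ends {f : ℝ → ℝ} (hm : MonotoneOn f (Icc 0 1))
    (him : f '' Icc 0 1 = Icc 0 1) : f 0 = 0 ∧ f 1 = 1 := by
  have h0m : (0:ℝ) ∈ Icc (0:ℝ) 1 := left_mem_Icc.2 zero_le_one
  have h1m : (1:ℝ) ∈ Icc (0:ℝ) 1 := right_mem_Icc.2 zero_le_one
  have hmaps : ∀ x ∈ Icc (0:ℝ) 1, f x ∈ Icc (0:ℝ) 1 := fun x hx => him ▸ mem_image_of_mem f hx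
  constructor
  · obtain ⟨x, hx, hfx⟩ : (0:ℝ) ∈ f '' Icc 0 1 := by rw [him]; exact h0m
    have := hm h0m hx hx.1
    have h0 := (hmaps 0 h0m).1
    rw [hfx] at this; linarith
  · obtain ⟨x, hx, hfx⟩ : (1:ℝ) ∈ f '' Icc 0 1 := by rw [him]; exact h1m
    have := hm hx h1m hx.2
    have h1 := (hmaps 1 h1m).2
    rw [hfx] at this; linarith

lemma key_exists {E : Type*} [SeminormedAddCommGroup E] (P Q : ℝ → E) (c : ℝ)
    (f g : ℝ → ℝ) (hf : MonotoneOn f (Icc 0 1)) (hg : MonotoneOn g (Icc 0 1))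
    (hfim : f '' Icc 0 1 = Icc 0 1) (hgim : g '' Icc 0 1 = Icc 0 1)
    (hb : ∀ t ∈ Icc (0:ℝ) 1, ‖P (f t) - Q (g t)‖ ≤ c) :
    ∃ F G : ℝ → ℝ, MonotoneOn F (Icc 0 1) ∧ MonotoneOn G (Icc 0 1) ∧
      (∀ u ∈ Icc (0:ℝ) 1, F u ∈ Icc (0:ℝ) 1 ∧ G u ∈ Icc (0:ℝ) 1) ∧
      F 0 = 0 ∧ G 0 = 0 ∧ F 1 = 1 ∧ G 1 = 1 ∧
      (∀ u ∈ Icc (0:ℝ) 1, F u + G u = 2*u) ∧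
      (∀ u ∈ Icc (0:ℝ) 1, ‖P (F u) - Q (G u)‖ ≤ c) := by
  have hfmaps : ∀ x ∈ Icc (0:ℝ) 1, f x ∈ Icc (0:ℝ) 1 := fun x hx => hfim ▸ mem_image_of_mem f hx
  have hgmaps : ∀ x ∈ Icc (0:ℝ) 1, g x ∈ Icc (0:ℝ) 1 := fun x hx => hgim ▸ mem_image_of_mem g hx
  obtain ⟨hf0, hf1⟩ := mono_surj_ends hf hfim
  obtain ⟨hg0, hg1⟩ := mono_surj_ends hg hgim
  have hfc := monoSurj_continuousOn hf hfim
  have hgc := monoSurj_continuousOn hg hgim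
  set s : ℝ → ℝ := fun x => f x + g x with hs
  have hsc : ContinuousOn s (Icc 0 1) := hfc.add hgc
  have hsm : MonotoneOn s (Icc 0 1) := hf.add hg
  have hs0 : s 0 = 0 := by simp [hs, hf0, hg0]
  have hs1 : s 1 = 2 := by simp [hs, hf1, hg1]; norm_num
  set A : ℝ → Set ℝ := fun u => {v | v ∈ Icc (0:ℝ) 1 ∧ 2*u ≤ s v} with hA
  set h : ℝ → ℝ := fun u => sInf (A u) with hh
  have hA1 : ∀ u ∈ Icc (0:ℝ) 1, (1:ℝ) ∈ A u := by
    intro u hu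
    exact ⟨right_mem_Icc.2 zero_le_one, by rw [hs1]; linarith [hu.2]⟩
  have hAbdd : ∀ u : ℝ, BddBelow (A u) := fun u => ⟨0, fun v hv => hv.1.1⟩
  have hAcl : ∀ u : ℝ, IsClosed (A u) := by
    intro u
    have : A u = Icc 0 1 ∩ s ⁻¹' (Ici (2*u)) := by ext v; simp [hA, and_comm]
    rw [this]
    exact hsc.preimage_isClosed_of_isClosed isClosed_Icc isClosed_Ici
  have hmemA : ∀ u ∈ Icc (0:ℝ) 1, h u ∈ A u :=
    fun u hu => (hAcl u).csInf_mem ⟨1, hA1 u hu⟩ (hAbdd u)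
  have hkey : ∀ u ∈ Icc (0:ℝ) 1, h u ∈ Icc (0:ℝ) 1 ∧ s (h u) = 2*u := by
    intro u hu
    obtain ⟨hmem, hge⟩ := hmemA u hu
    refine ⟨hmem, ?_⟩
    have h2u : 2*u ∈ Icc (s 0) (s (h u)) := ⟨by rw [hs0]; linarith [hu.1], hge⟩
    obtain ⟨v, hv, hsv⟩ := intermediate_value_Icc hmem.1
      (hsc.mono (Icc_subset_Icc le_rfl hmem.2)) h2u
    have hvA : v ∈ A u := ⟨⟨hv.1, le_trans hv.2 hmem.2⟩, hsv.ge⟩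
    have h1 : h u ≤ v := csInf_le (hAbdd u) hvA
    have h2 : v = h u := le_antisymm hv.2 h1
    rw [← h2]; exact hsv
  have hhmono : ∀ a ∈ Icc (0:ℝ) 1, ∀ b ∈ Icc (0:ℝ) 1, a ≤ b → h a ≤ h b := by
    intro a ha b hb hab
    exact csInf_le_csInf (hAbdd a) ⟨1, hA1 b hb⟩
      (fun v hv => ⟨hv.1, le_trans (by linarith) hv.2⟩)
  have hh0 : h 0 = 0 := by
    have h0A : (0:ℝ) ∈ A 0 := ⟨left_mem_Icc.2 zero_le_one, by rw [hs0]; norm_num⟩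
    have := csInf_le (hAbdd 0) h0A
    have h2 := (hmemA 0 (left_mem_Icc.2 zero_le_one)).1.1
    exact le_antisymm this h2
  refine ⟨f ∘ h, g ∘ h, ?_, ?_, ?_, ?_, ?_, ?_, ?_, ?_, ?_⟩
  · intro a ha b hb hab
    exact hf (hkey a ha).1 (hkey b hb).1 (hhmono a ha b hb hab)
  · intro a ha b hb hab
    exact hg (hkey a ha).1 (hkey b hb).1 (hhmono a ha b hb hab)
  · intro u hu
    exact ⟨hfmaps _ (hkey u hu).1, hgmaps _ (hkey u hu).1⟩
  · show f (h 0) = 0; rw [hh0, hf0]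
  · show g (h 0) = 0; rw [hh0, hg0]
  · -- F 1 = 1
    have hsum := (hkey 1 (right_mem_Icc.2 zero_le_one)).2
    have h1 := (hfmaps _ (hkey 1 (right_mem_Icc.2 zero_le_one)).1).2
    have h2 := (hgmaps _ (hkey 1 (right_mem_Icc.2 zero_le_one)).1).2
    show f (h 1) = 1
    simp only [hs] at hsum; linarith
  · have hsum := (hkey 1 (right_mem_Icc.2 zero_le_one)).2
    have h1 := (hfmaps _ (hkey 1 (right_mem_Icc.2 zero_le_one)).1).2
    have h2 := (hgmaps _ (hkey 1 (right_mem_Icc.2 zero_le_one)).1).2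
    show g (h 1) = 1
    simp only [hs] at hsum; linarith
  · intro u hu
    have := (hkey u hu).2
    simpa [hs] using this
  · intro u hu
    exact hb _ (hkey u hu).1

lemma polygonal_continuousOn {E : Type*} [SeminormedAddCommGroup E] [NormedSpace ℝ E]
    {P : ℝ → E} {n : ℕ} (hP : IsPolygonal P n) : ContinuousOn P (Icc 0 1) := by
  obtain ⟨m, -, t, ht0, ht1, htm, hseg⟩ := hP
  suffices H : ∀ i : Fin (m+1), ContinuousOn P (Icc (t 0) (t i)) by
    have := H (Fin.last m); rwa [ht0, ht1] at this
  intro i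
  induction i using Fin.induction with
  | zero => rw [Icc_self]; exact continuousOn_singleton _ _
  | succ i ih =>
      have h01 : t 0 ≤ t i.castSucc := htm (Fin.zero_le _)
      have h12 : t i.castSucc ≤ t i.succ := htm (Fin.castSucc_le_succ i)
      rw [← Icc_union_Icc_eq_Icc h01 h12]
      refine glueClosed isClosed_Icc isClosed_Icc ih ?_
      have hcont : ContinuousOn (fun u => P (t i.castSucc) +
          ((u - t i.castSucc) / (t i.succ - t i.castSucc)) •
            (P (t i.succ) - P (t i.castSucc))) (Icc (t i.castSucc) (t i.succ)) := by
        refine continuousOn_const.add (ContinuousOn.smul ?_ continuousOn_const)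
        exact (continuousOn_id.sub continuousOn_const).div_const _
      exact hcont.congr (fun u hu => hseg i u hu)

theorem stmt_4' {E : Type*} [SeminormedAddCommGroup E] [NormedSpace ℝ E]
    (P Q : ℝ → E) (hPc : ContinuousOn P (Icc 0 1)) (hQc : ContinuousOn Q (Icc 0 1))
    (Δ : ℝ) (hΔ : 0 ≤ Δ) :
    frechetDist P Q ≤ Δ ↔ IsMonotonePathIn (freeSpace Q P Δ) (0, 0) (1, 1) := by
  have h0m : (0:ℝ) ∈ Icc (0:ℝ) 1 := left_mem_Icc.2 zero_le_one
  have h1m : (1:ℝ) ∈ Icc (0:ℝ) 1 := right_mem_Icc.2 zero_le_one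
  set S : Set ℝ := {r : ℝ | ∃ f g : ℝ → ℝ,
    MonotoneOn f (Icc 0 1) ∧ MonotoneOn g (Icc 0 1) ∧
    f '' Icc 0 1 = Icc 0 1 ∧ g '' Icc 0 1 = Icc 0 1 ∧
    ∀ t ∈ Icc (0:ℝ) 1, ‖P (f t) - Q (g t)‖ ≤ r} with hSdef
  have hfd : frechetDist P Q = sInf S := rfl
  have hSbdd : BddBelow S := by
    refine ⟨0, fun r hr => ?_⟩
    obtain ⟨f, g, -, -, -, -, hb⟩ := hr
    exact le_trans (norm_nonneg _) (hb 0 h0m)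
  have hSne : S.Nonempty := by
    obtain ⟨x, hx, hmax⟩ := isCompact_Icc.exists_isMaxOn (nonempty_Icc.2 zero_le_one)
      ((hPc.sub hQc).norm)
    exact ⟨‖P x - Q x‖, id, id, monotoneOn_id, monotoneOn_id, image_id _, image_id _,
      fun u hu => hmax hu⟩
  constructor
  · -- forward
    intro hle
    rw [hfd] at hle
    set B : Set (ℝ × ℝ) := Icc 0 1 ×ˢ Icc 0 1 with hBdef
    have hBcl : IsClosed B := isClosed_Icc.prod isClosed_Icc
    set c : ℕ → ℝ := fun k => Δ + 1/((k:ℝ)+1) with hcdef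
    set D : ℕ → Set (ℝ × ℝ) := fun k => {p | p ∈ B ∧ ‖P p.1 - Q p.2‖ ≤ c k} with hDdef
    have hDcl : ∀ k, IsClosed (D k) := by
      intro k
      have hφ : ContinuousOn (fun p : ℝ × ℝ => ‖P p.1 - Q p.2‖) B :=
        ((hPc.comp continuous_fst.continuousOn (fun p hp => hp.1)).sub
          (hQc.comp continuous_snd.continuousOn (fun p hp => hp.2))).norm
      have := hφ.preimage_isClosed_of_isClosed hBcl (isClosed_Iic (a := c k))
      convert this using 1
      rfl
    have hcmono : ∀ k : ℕ, c (k+1) ≤ c k := by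
      intro k
      have h1 : (1:ℝ)/((k:ℝ)+1+1) ≤ 1/((k:ℝ)+1) :=
        one_div_le_one_div_of_le (by positivity) (by linarith)
      simp only [hcdef]; push_cast; linarith
    set K : ℕ → Set (ℝ → ℝ × ℝ) := fun k =>
      {γ | (∀ t : ℝ, γ t ∈ B) ∧ γ 0 = ((0:ℝ), (0:ℝ)) ∧ γ 1 = ((1:ℝ), (1:ℝ)) ∧
        (∀ a ∈ Icc (0:ℝ) 1, ∀ b ∈ Icc (0:ℝ) 1, a ≤ b →
          (γ a).1 ≤ (γ b).1 ∧ (γ a).2 ≤ (γ b).2) ∧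
        (∀ u ∈ Icc (0:ℝ) 1, (γ u).1 + (γ u).2 = 2*u) ∧
        (∀ u ∈ Icc (0:ℝ) 1, γ u ∈ D k)} with hKdef
    have hKcl : ∀ k, IsClosed (K k) := by
      intro k
      have : K k = (⋂ t : ℝ, {γ : ℝ → ℝ × ℝ | γ t ∈ B}) ∩
          ({γ : ℝ → ℝ × ℝ | γ 0 = ((0:ℝ), (0:ℝ))} ∩
          ({γ : ℝ → ℝ × ℝ | γ 1 = ((1:ℝ), (1:ℝ))} ∩
          ((⋂ a : ℝ, ⋂ (_ : a ∈ Icc (0:ℝ) 1), ⋂ b : ℝ, ⋂ (_ : b ∈ Icc (0:ℝ) 1), ⋂ (_ : a ≤ b),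
            ({γ : ℝ → ℝ × ℝ | (γ a).1 ≤ (γ b).1} ∩ {γ : ℝ → ℝ × ℝ | (γ a).2 ≤ (γ b).2})) ∩
          ((⋂ u : ℝ, ⋂ (_ : u ∈ Icc (0:ℝ) 1), {γ : ℝ → ℝ × ℝ | (γ u).1 + (γ u).2 = 2*u}) ∩
          (⋂ u : ℝ, ⋂ (_ : u ∈ Icc (0:ℝ) 1), {γ : ℝ → ℝ × ℝ | γ u ∈ D k}))))) := by
        ext γ
        simp only [hKdef, mem_setOf_eq, mem_inter_iff, mem_iInter, mem_setOf_eq]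
      rw [this]
      have c1 : IsClosed (⋂ t : ℝ, {γ : ℝ → ℝ × ℝ | γ t ∈ B}) :=
        isClosed_iInter (fun t => hBcl.preimage (continuous_apply t))
      have c2 : IsClosed {γ : ℝ → ℝ × ℝ | γ 0 = ((0:ℝ), (0:ℝ))} :=
        isClosed_eq (continuous_apply 0) continuous_const
      have c3 : IsClosed {γ : ℝ → ℝ × ℝ | γ 1 = ((1:ℝ), (1:ℝ))} :=
        isClosed_eq (continuous_apply 1) continuous_const
      have c4 : IsClosed (⋂ a : ℝ, ⋂ (_ : a ∈ Icc (0:ℝ) 1), ⋂ b : ℝ,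
          ⋂ (_ : b ∈ Icc (0:ℝ) 1), ⋂ (_ : a ≤ b),
          ({γ : ℝ → ℝ × ℝ | (γ a).1 ≤ (γ b).1} ∩ {γ : ℝ → ℝ × ℝ | (γ a).2 ≤ (γ b).2})) := by
        refine isClosed_iInter fun a => isClosed_iInter fun _ => isClosed_iInter fun b =>
          isClosed_iInter fun _ => isClosed_iInter fun _ => IsClosed.inter ?_ ?_
        · exact isClosed_le (continuous_fst.comp (continuous_apply a))
            (continuous_fst.comp (continuous_apply b))
        · exact isClosed_le (continuous_snd.comp (continuous_apply a))
            (continuous_snd.comp (continuous_apply b))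
      have c5 : IsClosed (⋂ u : ℝ, ⋂ (_ : u ∈ Icc (0:ℝ) 1),
          {γ : ℝ → ℝ × ℝ | (γ u).1 + (γ u).2 = 2*u}) :=
        isClosed_iInter fun u => isClosed_iInter fun _ =>
          isClosed_eq ((continuous_fst.comp (continuous_apply u)).add
            (continuous_snd.comp (continuous_apply u))) continuous_const
      have c6 : IsClosed (⋂ u : ℝ, ⋂ (_ : u ∈ Icc (0:ℝ) 1),
          {γ : ℝ → ℝ × ℝ | γ u ∈ D k}) :=
        isClosed_iInter fun u => isClosed_iInter fun _ =>
          (hDcl k).preimage (continuous_apply u)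
      exact c1.inter (c2.inter (c3.inter (c4.inter (c5.inter c6))))
    have hKne : ∀ k : ℕ, (K k).Nonempty := by
      intro k
      have hpos : (0:ℝ) < 1/((k:ℝ)+1) := by positivity
      obtain ⟨r, hrS, hrlt⟩ := exists_lt_of_csInf_lt hSne
        (lt_of_le_of_lt hle (by simp only [hcdef] at *; linarith) : sInf S < c k)
      obtain ⟨f, g, hfm, hgm, hfim, hgim, hbb⟩ := hrS
      obtain ⟨F, G, hFm, hGm, hFGmem, hF0, hG0, hF1, hG1, hsum, hbound⟩ :=
        key_exists P Q (c k) f g hfm hgm hfim hgim (fun t ht => le_trans (hbb t ht) hrlt.le)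
      set cl : ℝ → ℝ := fun x => max 0 (min 1 x) with hcl
      have hclmem : ∀ x : ℝ, cl x ∈ Icc (0:ℝ) 1 :=
        fun x => ⟨le_max_left _ _, max_le zero_le_one (min_le_left _ _)⟩
      have hcleq : ∀ x ∈ Icc (0:ℝ) 1, cl x = x := by
        intro x hx
        simp only [hcl]
        rw [min_eq_right hx.2, max_eq_right hx.1]
      refine ⟨fun x => (F (cl x), G (cl x)), ?_, ?_, ?_, ?_, ?_, ?_⟩
      · intro x
        exact ⟨(hFGmem _ (hclmem x)).1, (hFGmem _ (hclmem x)).2⟩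
      · show (F (cl 0), G (cl 0)) = ((0:ℝ), (0:ℝ))
        rw [hcleq 0 h0m]; simp [hF0, hG0]
      · show (F (cl 1), G (cl 1)) = ((1:ℝ), (1:ℝ))
        rw [hcleq 1 h1m]; simp [hF1, hG1]
      · intro a ha b hb hab
        show F (cl a) ≤ F (cl b) ∧ G (cl a) ≤ G (cl b)
        rw [hcleq a ha, hcleq b hb]
        exact ⟨hFm ha hb hab, hGm ha hb hab⟩
      · intro u hu
        show F (cl u) + G (cl u) = 2*u
        rw [hcleq u hu]; exact hsum u hu
      · intro u hu
        show (F (cl u), G (cl u)) ∈ D k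
        rw [hcleq u hu]
        exact ⟨⟨(hFGmem _ hu).1, (hFGmem _ hu).2⟩, hbound u hu⟩
    have hKsub : ∀ k : ℕ, K (k+1) ⊆ K k := by
      intro k γ hγ
      refine ⟨hγ.1, hγ.2.1, hγ.2.2.1, hγ.2.2.2.1, hγ.2.2.2.2.1, fun u hu => ?_⟩
      obtain ⟨hB, hn⟩ := hγ.2.2.2.2.2 u hu
      exact ⟨hB, le_trans hn (hcmono k)⟩
    have hK0comp : IsCompact (K 0) := by
      have hpi : IsCompact {γ : ℝ → ℝ × ℝ | ∀ t, γ t ∈ B} := by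
        have h := isCompact_univ_pi (fun _ : ℝ => (isCompact_Icc.prod isCompact_Icc :
          IsCompact B))
        convert h using 1
        ext γ
        simp only [Set.mem_univ_pi, mem_setOf_eq]
        exact Iff.rfl
      exact hpi.of_isClosed_subset (hKcl 0) (fun γ hγ => hγ.1)
    obtain ⟨γ, hγ⟩ := IsCompact.nonempty_iInter_of_sequence_nonempty_isCompact_isClosed
      K hKsub hKne hK0comp hKcl
    rw [mem_iInter] at hγ
    obtain ⟨hbox, hγ0, hγ1, hmono, hsum, -⟩ := hγ 0
    have hD : ∀ k : ℕ, ∀ u ∈ Icc (0:ℝ) 1, ‖P (γ u).1 - Q (γ u).2‖ ≤ c k :=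
      fun k u hu => ((hγ k).2.2.2.2.2 u hu).2
    have hnorm : ∀ u ∈ Icc (0:ℝ) 1, ‖P (γ u).1 - Q (γ u).2‖ ≤ Δ := by
      intro u hu
      by_contra hcon
      push_neg at hcon
      obtain ⟨k, hk⟩ := exists_nat_one_div_lt (sub_pos.2 hcon)
      have := hD k u hu
      simp only [hcdef] at this
      linarith
    have hlip : ∀ a ∈ Icc (0:ℝ) 1, ∀ b ∈ Icc (0:ℝ) 1, a ≤ b →
        (γ b).1 - (γ a).1 ≤ 2*(b-a) ∧ (γ b).2 - (γ a).2 ≤ 2*(b-a) := by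
      intro a ha b hb hab
      have h1 := hsum a ha
      have h2 := hsum b hb
      have h3 := hmono a ha b hb hab
      constructor <;> linarith [h3.1, h3.2]
    have hc1 : ContinuousOn (fun u => (γ u).1) (Icc 0 1) := by
      refine LipschitzOnWith.continuousOn (K := 2) (LipschitzOnWith.of_dist_le_mul ?_)
      intro x hx y hy
      rcases le_total x y with h | h
      · have hm := (hmono x hx y hy h).1
        have hl := (hlip x hx y hy h).1
        rw [Real.dist_eq, Real.dist_eq, abs_sub_comm ((γ x).1) ((γ y).1),
          abs_of_nonneg (sub_nonneg.2 hm), abs_sub_comm x y, abs_of_nonneg (sub_nonneg.2 h)]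
        push_cast; linarith
      · have hm := (hmono y hy x hx h).1
        have hl := (hlip y hy x hx h).1
        rw [Real.dist_eq, Real.dist_eq, abs_of_nonneg (sub_nonneg.2 hm),
          abs_of_nonneg (sub_nonneg.2 h)]
        push_cast; linarith
    have hc2 : ContinuousOn (fun u => (γ u).2) (Icc 0 1) := by
      refine LipschitzOnWith.continuousOn (K := 2) (LipschitzOnWith.of_dist_le_mul ?_)
      intro x hx y hy
      rcases le_total x y with h | h
      · have hm := (hmono x hx y hy h).2
        have hl := (hlip x hx y hy h).2
        rw [Real.dist_eq, Real.dist_eq, abs_sub_comm ((γ x).2) ((γ y).2),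
          abs_of_nonneg (sub_nonneg.2 hm), abs_sub_comm x y, abs_of_nonneg (sub_nonneg.2 h)]
        push_cast; linarith
      · have hm := (hmono y hy x hx h).2
        have hl := (hlip y hy x hx h).2
        rw [Real.dist_eq, Real.dist_eq, abs_of_nonneg (sub_nonneg.2 hm),
          abs_of_nonneg (sub_nonneg.2 h)]
        push_cast; linarith
    refine ⟨γ, ?_, hγ0, hγ1, ?_, ?_, ?_⟩
    · have := hc1.prodMk hc2
      simpa using this
    · exact fun a ha b hb hab => (hmono a ha b hb hab).1
    · exact fun a ha b hb hab => (hmono a ha b hb hab).2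
    · intro u hu
      exact ⟨(hbox u).1, (hbox u).2, hnorm u hu⟩
  · -- reverse
    rintro ⟨γ, hγc, hγ0, hγ1, hm1, hm2, hmem⟩
    rw [hfd]
    have hfim : (fun u => (γ u).1) '' Icc 0 1 = Icc 0 1 := by
      apply Subset.antisymm
      · rintro _ ⟨u, hu, rfl⟩; exact (hmem u hu).1
      · have hpc : IsPreconnected ((fun u => (γ u).1) '' Icc 0 1) :=
          (isPreconnected_Icc).image _ (continuous_fst.comp_continuousOn hγc)
        refine hpc.Icc_subset ⟨0, h0m, ?_⟩ ⟨1, h1m, ?_⟩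
        · show (γ 0).1 = 0; rw [hγ0]
        · show (γ 1).1 = 1; rw [hγ1]
    have hgim : (fun u => (γ u).2) '' Icc 0 1 = Icc 0 1 := by
      apply Subset.antisymm
      · rintro _ ⟨u, hu, rfl⟩; exact (hmem u hu).2.1
      · have hpc : IsPreconnected ((fun u => (γ u).2) '' Icc 0 1) :=
          (isPreconnected_Icc).image _ (continuous_snd.comp_continuousOn hγc)
        refine hpc.Icc_subset ⟨0, h0m, ?_⟩ ⟨1, h1m, ?_⟩
        · show (γ 0).2 = 0; rw [hγ0]
        · show (γ 1).2 = 1; rw [hγ1]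
    exact csInf_le hSbdd ⟨fun u => (γ u).1, fun u => (γ u).2, hm1, hm2, hfim, hgim,
      fun u hu => (hmem u hu).2.2⟩

/-- For polygonal curves `P, Q` over `[0,1]` and `Δ ≥ 0`, the Fréchet distance
`d_F(P,Q)` is at most `Δ` iff there is a path from `(0,0)` to `(1,1)` inside the `Δ`-free
space `{(x,y) ∈ [0,1]² : ‖P(x) − Q(y)‖ ≤ Δ}` that is monotone nondecreasing in both
coordinates. -/
theorem stmt_4 {E : Type*} [SeminormedAddCommGroup E] [NormedSpace ℝ E]
    (P Q : ℝ → E) (n m : ℕ) (hP : IsPolygonal P n) (hQ : IsPolygonal Q m)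
    (Δ : ℝ) (hΔ : 0 ≤ Δ) :
    frechetDist P Q ≤ Δ ↔ IsMonotonePathIn (freeSpace Q P Δ) (0, 0) (1, 1) :=
  stmt_4' P Q (polygonal_continuousOn hP) (polygonal_continuousOn hQ) Δ hΔ
end

section
/- Let f : 𝒫(𝒮) → ℝ be a monotone submodular function with f(∅) = 0 on a finite ground set 𝒮, and let k ≥ 1. The greedy algorithm that iteratively adds the element maximizing the marginal gain produces after k steps a set R with f(R) ≥ (1 − 1/e)·max{f(C) : C ⊆ 𝒮, |C| = k}. -/
/-- Nemhauser–Wolsey–Fisher greedy bound for monotone submodular maximization.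
If `f` is monotone submodular with `f ∅ = 0` on a finite nonempty ground set `𝒮`, and `R`
is a run of the greedy algorithm that at each step adds an element of `𝒮` maximizing the
value, then after `k` steps `f (R k) ≥ (1 − 1/e) · f C` for every `C ⊆ 𝒮` with `|C| = k`. -/
theorem stmt_13 {α : Type*} [DecidableEq α] (𝒮 : Finset α) (h𝒮 : 𝒮.Nonempty)
    (f : Finset α → ℝ)
    (hmono : ∀ A B : Finset α, A ⊆ B → B ⊆ 𝒮 → f A ≤ f B)
    (hzero : f ∅ = 0)
    (hsubmod : ∀ (A B : Finset α) (x : α), A ⊆ B → B ⊆ 𝒮 → x ∈ 𝒮 → x ∉ B →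
      f (insert x B) - f B ≤ f (insert x A) - f A)
    (R : ℕ → Finset α) (hR0 : R 0 = ∅)
    (hstep : ∀ k : ℕ, ∃ x ∈ 𝒮, R (k + 1) = insert x (R k) ∧
      ∀ y ∈ 𝒮, f (insert y (R k)) ≤ f (insert x (R k)))
    (k : ℕ) (hk : 1 ≤ k) (C : Finset α) (hC : C ⊆ 𝒮) (hCk : C.card = k) :
    (1 - 1 / Real.exp 1) * f C ≤ f (R k) := by
  classical
  have hRsub : ∀ n, R n ⊆ 𝒮 := by
    intro n
    induction n with
    | zero => simp [hR0]
    | succ n ih =>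
      obtain ⟨x, hx, hRe, _⟩ := hstep n
      rw [hRe]; exact Finset.insert_subset hx ih
  have hk' : (k : ℝ) ≠ 0 := by positivity
  have hkpos : (0:ℝ) < k := by positivity
  have hk1 : (1:ℝ) ≤ (k:ℝ) := by exact_mod_cast hk
  have hbase : (0:ℝ) ≤ 1 - 1/(k:ℝ) := by
    have : 1/(k:ℝ) ≤ 1 := by
      rw [div_le_one hkpos]; exact hk1
    linarith
  -- key submodularity sum bound
  have hsum : ∀ S : Finset α, S ⊆ 𝒮 → ∀ A : Finset α, A ⊆ 𝒮 →
      f (A ∪ S) - f A ≤ ∑ x ∈ S, (f (insert x A) - f A) := by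
    intro S
    induction S using Finset.induction_on with
    | empty => intro _ A _; simp
    | @insert y S hy ihS =>
      intro hS A hA
      have hS' : S ⊆ 𝒮 := fun z hz => hS (Finset.mem_insert_of_mem hz)
      have hy𝒮 : y ∈ 𝒮 := hS (Finset.mem_insert_self y S)
      rw [Finset.union_insert, Finset.sum_insert hy]
      have hIH := ihS hS' A hA
      by_cases hyAS : y ∈ A ∪ S
      · rw [Finset.insert_eq_self.mpr hyAS]
        have h2 : f A ≤ f (insert y A) :=
          hmono A (insert y A) (Finset.subset_insert _ _) (Finset.insert_subset hy𝒮 hA)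
        linarith
      · have hsub : f (insert y (A ∪ S)) - f (A ∪ S) ≤ f (insert y A) - f A :=
          hsubmod A (A ∪ S) y Finset.subset_union_left (Finset.union_subset hA hS') hy𝒮 hyAS
        linarith
  have hCnn : 0 ≤ f C := by
    have := hmono ∅ C (Finset.empty_subset _) hC
    linarith
  have key : ∀ n, f C - f (R (n+1)) ≤ (1 - 1/(k:ℝ)) * (f C - f (R n)) := by
    intro n
    obtain ⟨x, hx, hRe, hmax⟩ := hstep n
    have hA := hRsub n
    have h1 : f C ≤ f (R n ∪ C) :=
      hmono C _ Finset.subset_union_right (Finset.union_subset hA hC)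
    have h2 := hsum C hC (R n) hA
    have h3 : ∑ x' ∈ C, (f (insert x' (R n)) - f (R n)) ≤ (k:ℝ) * (f (R (n+1)) - f (R n)) := by
      rw [hRe]
      calc ∑ x' ∈ C, (f (insert x' (R n)) - f (R n))
          ≤ ∑ _x' ∈ C, (f (insert x (R n)) - f (R n)) :=
            Finset.sum_le_sum (fun y hy => by have := hmax y (hC hy); linarith)
        _ = (k:ℝ) * (f (insert x (R n)) - f (R n)) := by
            rw [Finset.sum_const, hCk, nsmul_eq_mul]
    have h4 : f C - f (R n) ≤ (k:ℝ) * (f (R (n+1)) - f (R n)) := by linarith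
    have e1 : (1 - 1/(k:ℝ)) * (f C - f (R n))
        = (f C - f (R n)) - (f C - f (R n))/(k:ℝ) := by
      field_simp
    have h5 : (f C - f (R n))/(k:ℝ) ≤ f (R (n+1)) - f (R n) := by
      rw [div_le_iff₀ hkpos]; linarith
    linarith
  have hiter : ∀ n, f C - f (R n) ≤ (1 - 1/(k:ℝ))^n * f C := by
    intro n
    induction n with
    | zero => simp [hR0, hzero]
    | succ n ih =>
      calc f C - f (R (n+1)) ≤ (1 - 1/(k:ℝ)) * (f C - f (R n)) := key n
        _ ≤ (1 - 1/(k:ℝ)) * ((1 - 1/(k:ℝ))^n * f C) :=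
            mul_le_mul_of_nonneg_left ih hbase
        _ = (1 - 1/(k:ℝ))^(n+1) * f C := by ring
  have hexp : (1 - 1/(k:ℝ))^k ≤ Real.exp (-1) := by
    have h1 : 1 - 1/(k:ℝ) ≤ Real.exp (-(1/(k:ℝ))) := by
      have := Real.add_one_le_exp (-(1/(k:ℝ)))
      linarith
    calc (1 - 1/(k:ℝ))^k ≤ (Real.exp (-(1/(k:ℝ))))^k := pow_le_pow_left₀ hbase h1 k
      _ = Real.exp ((k:ℝ) * (-(1/(k:ℝ)))) := (Real.exp_nat_mul _ k).symm
      _ = Real.exp (-1) := by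
          congr 1
          field_simp
  have hfinal : f C - f (R k) ≤ Real.exp (-1) * f C := by
    calc f C - f (R k) ≤ (1 - 1/(k:ℝ))^k * f C := hiter k
      _ ≤ Real.exp (-1) * f C := mul_le_mul_of_nonneg_right hexp hCnn
  have hexpneg : Real.exp (-1) = 1 / Real.exp 1 := by
    rw [Real.exp_neg]; ring
  rw [hexpneg] at hfinal
  linarith
end

section
/- Let F ⊆ [0,1]² be convex, and for y ∈ [0,1] let l(y) = inf{x : (x,y) ∈ F} and r(y) = sup{x : (x,y) ∈ F} (defined when the horizontal slice is nonempty). Suppose s ≤ t, the slices at heights s and t are nonempty, the topmost points of F (points maximizing y) all have x-coordinate strictly less than l(s), and both l(s) and r(t) are strictly less than the x-coordinates of all bottommost points of F. Then l(t) ≤ l(s) and r(t) ≤ r(s); in particular l(s), r(t) ∈ [l(t), r(s)]. -/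
open Set

/-- Leftmost `x`-coordinate of the horizontal slice of `F` at height `y`. -/
noncomputable def slL (F : Set (ℝ × ℝ)) (y : ℝ) : ℝ := sInf {x : ℝ | (x, y) ∈ F}

/-- Rightmost `x`-coordinate of the horizontal slice of `F` at height `y`. -/
noncomputable def slR (F : Set (ℝ × ℝ)) (y : ℝ) : ℝ := sSup {x : ℝ | (x, y) ∈ F}

lemma mem_at_height {F : Set (ℝ × ℝ)} (hconv : Convex ℝ F) {p q : ℝ × ℝ}
    (hp : p ∈ F) (hq : q ∈ F) {y : ℝ} (h1 : p.2 ≤ y) (h2 : y ≤ q.2) :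
    ∃ x, (x, y) ∈ F ∧ min p.1 q.1 ≤ x ∧ x ≤ max p.1 q.1 := by
  rcases eq_or_lt_of_le (h1.trans h2) with h | h
  · have hy : y = p.2 := le_antisymm (h ▸ h2) h1
    exact ⟨p.1, by rw [hy]; exact hp, min_le_left _ _, le_max_left _ _⟩
  · obtain ⟨lam, hlam⟩ : ∃ lam : ℝ, lam = (q.2 - y) / (q.2 - p.2) := ⟨_, rfl⟩
    have hd : 0 < q.2 - p.2 := by linarith
    have h0 : 0 ≤ lam := hlam ▸ div_nonneg (by linarith) hd.le
    have h1' : lam ≤ 1 := by rw [hlam, div_le_one hd]; linarith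
    have hmem := hconv hp hq (b := 1 - lam) h0 (by linarith) (by ring)
    have hc : lam * (q.2 - p.2) = q.2 - y := by rw [hlam]; exact div_mul_cancel₀ _ hd.ne'
    have hsnd : lam * p.2 + (1 - lam) * q.2 = y := by linear_combination -hc
    refine ⟨lam * p.1 + (1 - lam) * q.1, ?_, ?_, ?_⟩
    · have he : lam • p + (1 - lam) • q = (lam * p.1 + (1 - lam) * q.1, y) := by
        rw [Prod.ext_iff]
        constructor <;> simp [smul_eq_mul, hsnd]
      rwa [he] at hmem
    · nlinarith [min_le_left p.1 q.1, min_le_right p.1 q.1]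
    · nlinarith [le_max_left p.1 q.1, le_max_right p.1 q.1]

lemma slice_facts {F : Set (ℝ × ℝ)} (hF : F ⊆ Icc (0:ℝ) 1 ×ˢ Icc (0:ℝ) 1)
    (hcomp : IsCompact F) {y : ℝ} (hy : ∃ x, (x, y) ∈ F) :
    (slL F y, y) ∈ F ∧ (slR F y, y) ∈ F ∧
      ∀ x, (x, y) ∈ F → slL F y ≤ x ∧ x ≤ slR F y := by
  set S : Set ℝ := {x : ℝ | (x, y) ∈ F} with hS
  have hne : S.Nonempty := hy
  have hsub : S ⊆ Icc (0:ℝ) 1 := fun x hx => (hF hx).1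
  have hbb : BddBelow S := ⟨0, fun x hx => (hsub hx).1⟩
  have hba : BddAbove S := ⟨1, fun x hx => (hsub hx).2⟩
  have hcl : IsClosed S := hcomp.isClosed.preimage (by fun_prop : Continuous fun x : ℝ => (x, y))
  refine ⟨hcl.csInf_mem hne hbb, hcl.csSup_mem hne hba, fun x hx => ⟨csInf_le hbb hx, le_csSup hba hx⟩⟩

/-- Reversal lemma for a "bad" convex cell. If `F ⊆ [0,1]²` is a nonempty
compact convex set, `s ≤ t` with nonempty slices, all topmost points of `F` lie strictly
left of `l(s)`, and both `l(s)` and `r(t)` lie strictly left of all bottommost points,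
then `l(t) ≤ l(s)` and `r(t) ≤ r(s)`; in particular `l(s), r(t) ∈ [l(t), r(s)]`. -/
theorem stmt_17 (F : Set (ℝ × ℝ)) (hF : F ⊆ Icc (0:ℝ) 1 ×ˢ Icc (0:ℝ) 1)
    (hconv : Convex ℝ F) (hcomp : IsCompact F) (hne : F.Nonempty)
    (s t : ℝ) (hst : s ≤ t)
    (hs : ∃ x, (x, s) ∈ F) (ht : ∃ x, (x, t) ∈ F)
    (htop : ∀ p ∈ F, p.2 = sSup (Prod.snd '' F) → p.1 < slL F s)
    (hbot : ∀ p ∈ F, p.2 = sInf (Prod.snd '' F) → slL F s < p.1 ∧ slR F t < p.1) :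
    slL F t ≤ slL F s ∧ slR F t ≤ slR F s ∧
      slL F s ∈ Icc (slL F t) (slR F s) ∧ slR F t ∈ Icc (slL F t) (slR F s) := by
  obtain ⟨hlsF, hrsF, hs_bound⟩ := slice_facts hF hcomp hs
  obtain ⟨hltF, hrtF, ht_bound⟩ := slice_facts hF hcomp ht
  have himg : IsCompact (Prod.snd '' F) := hcomp.image continuous_snd
  have himg_ne : (Prod.snd '' F).Nonempty := hne.image _
  -- bottommost point
  obtain ⟨B, hBF, hB2⟩ := himg.sInf_mem himg_ne
  -- topmost point
  obtain ⟨T, hTF, hT2⟩ := himg.sSup_mem himg_ne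
  have hBbot := hbot B hBF hB2
  have hTtop := htop T hTF hT2
  have hBs : B.2 ≤ s := hB2 ▸ csInf_le himg.bddBelow ⟨(slL F s, s), hlsF, rfl⟩
  have hTt : t ≤ T.2 := hT2 ▸ le_csSup himg.bddAbove ⟨(slL F t, t), hltF, rfl⟩
  -- r(t) ≤ r(s)
  have hr : slR F t ≤ slR F s := by
    by_contra h
    push_neg at h
    obtain ⟨x, hxF, hxmin, _⟩ :=
      mem_at_height hconv hBF hrtF (y := s) hBs hst
    have hx1 : x ≤ slR F s := (hs_bound x hxF).2
    have : slR F s < min B.1 (slR F t) := lt_min (h.trans hBbot.2) h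
    linarith [this.trans_le hxmin]
  -- l(t) ≤ l(s)
  have hl : slL F t ≤ slL F s := by
    by_contra h
    push_neg at h
    obtain ⟨x, hxF, _, hxmax⟩ :=
      mem_at_height hconv hlsF hTF (p := (slL F s, s)) hst hTt
    have hx1 : slL F t ≤ x := (ht_bound x hxF).1
    have : max (slL F s) T.1 < slL F t := max_lt h (hTtop.trans h)
    linarith [hxmax.trans_lt this]
  have hls_le_rs : slL F s ≤ slR F s := (hs_bound _ hlsF).2
  have hlt_le_rt : slL F t ≤ slR F t := (ht_bound _ hltF).2
  exact ⟨hl, hr, ⟨hl, hls_le_rs⟩, ⟨hlt_le_rt, hr⟩⟩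
end
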